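/- For λ ∈ (0,1), the functions W(x) = (1/Γ(1-λ)) ∫₀ˣ (e^y - 1)^{-λ} dy and W*(x) = (1/Γ(λ)) ∫₀ˣ (1 - e^{-z})^{λ-1} dz satisfy the convolution identity ∫₀ˣ W'(y) W*'(x-y) dy = 1 for all x > 0, i.e. dW * dW* = dx. -/

import Mathlib

open Real MeasureTheory

lemma real_beta_lemma (lam : ℝ) (h1 : 0 < lam) (h2 : lam < 1) :
    (∫ u in (0:ℝ)..1, u ^ (lam - 1) * (1 - u) ^ (-lam)) =
      Real.Gamma lam * Real.Gamma (1 - lam) := by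
  have hs : 0 < (lam : ℂ).re := by simpa using h1
  have ht : 0 < (((1 - lam : ℝ)) : ℂ).re := by simpa using (by linarith : (0:ℝ) < 1 - lam)
  have hβ := Complex.Gamma_mul_Gamma_eq_betaIntegral (s := (lam : ℂ)) (t := ((1 - lam : ℝ) : ℂ)) hs ht
  have hsum : (lam : ℂ) + ((1 - lam : ℝ) : ℂ) = 1 := by push_cast; ring
  rw [hsum, Complex.Gamma_one, one_mul] at hβ
  have key : Complex.betaIntegral (lam : ℂ) ((1 - lam : ℝ) : ℂ) =
      ((∫ u in (0:ℝ)..1, u ^ (lam - 1) * (1 - u) ^ (-lam)) : ℝ) := by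
    rw [Complex.betaIntegral]
    rw [← intervalIntegral.integral_ofReal]
    apply intervalIntegral.integral_congr
    intro u hu
    rw [Set.uIcc_of_le (by norm_num : (0:ℝ) ≤ 1)] at hu
    obtain ⟨hu0, hu1⟩ := hu
    have h1u : (0:ℝ) ≤ 1 - u := by linarith
    simp only
    have e1 : ((lam:ℂ) - 1) = ((lam - 1 : ℝ) : ℂ) := by push_cast; ring
    have e2 : (((1 - lam : ℝ) : ℂ) - 1) = ((-lam : ℝ) : ℂ) := by push_cast; ring
    rw [e1, e2, show (1 - (u:ℂ)) = ((1 - u : ℝ) : ℂ) by push_cast; ring,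
      ← Complex.ofReal_cpow hu0, ← Complex.ofReal_cpow h1u, ← Complex.ofReal_mul]
  rw [key, Complex.Gamma_ofReal, Complex.Gamma_ofReal, ← Complex.ofReal_mul] at hβ
  exact_mod_cast hβ.symm

lemma inner_integral (lam : ℝ) (h1 : 0 < lam) (h2 : lam < 1) (x : ℝ) (hx : 0 < x) :
    (∫ y in (0:ℝ)..x, (Real.exp y - 1) ^ (-lam) * (1 - Real.exp (-(x - y))) ^ (lam - 1)) =
      Real.Gamma lam * Real.Gamma (1 - lam) := by
  set c : ℝ := Real.exp x - 1 with hc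
  have hex : 1 < Real.exp x := by
    rw [← Real.exp_zero]; exact Real.exp_lt_exp.mpr hx
  have hcpos : 0 < c := by simp only [hc]; linarith
  set φ : ℝ → ℝ := fun u => x - Real.log (1 + c * u) with hφ
  set φ' : ℝ → ℝ := fun u => -(c / (1 + c * u)) with hφ'
  have hD : ∀ u : ℝ, u ∈ Set.Ioo (0:ℝ) 1 → 0 < 1 + c * u := fun u hu => by nlinarith [hu.1]
  have himg : φ '' Set.Ioo 0 1 = Set.Ioo 0 x := by
    ext y
    constructor
    · rintro ⟨u, hu, rfl⟩
      have hD1 : 1 < 1 + c * u := by nlinarith [hu.1]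
      have hDx : 1 + c * u < Real.exp x := by nlinarith [hu.2]
      have hl1 : Real.log (1 + c * u) < x := by
        calc Real.log (1 + c * u) < Real.log (Real.exp x) :=
              Real.log_lt_log (by linarith) hDx
          _ = x := Real.log_exp x
      have hl0 : 0 < Real.log (1 + c * u) := Real.log_pos hD1
      exact ⟨by simp only [hφ]; linarith, by simp only [hφ]; linarith⟩
    · intro hy
      refine ⟨(Real.exp (x - y) - 1) / c, ⟨?_, ?_⟩, ?_⟩
      · have : 1 < Real.exp (x - y) := by
          rw [← Real.exp_zero]; exact Real.exp_lt_exp.mpr (by linarith [hy.2])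
        exact div_pos (by linarith) hcpos
      · have : Real.exp (x - y) < Real.exp x := Real.exp_lt_exp.mpr (by linarith [hy.1])
        rw [div_lt_one hcpos]
        simp only [hc]; linarith
      · simp only [hφ]
        rw [mul_div_cancel₀ _ hcpos.ne']
        rw [show (1 + (Real.exp (x - y) - 1)) = Real.exp (x - y) by ring, Real.log_exp]
        ring
  have hder : ∀ u ∈ Set.Ioo (0:ℝ) 1, HasDerivWithinAt φ (φ' u) (Set.Ioo 0 1) u := by
    intro u hu
    have hDu := hD u hu
    have hlin : HasDerivAt (fun u : ℝ => 1 + c * u) c u := by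
      simpa using ((hasDerivAt_id u).const_mul c).const_add 1
    have hlog : HasDerivAt (fun u : ℝ => Real.log (1 + c * u)) ((1 + c * u)⁻¹ * c) u :=
      by have := (Real.hasDerivAt_log hDu.ne').comp u hlin; exact this
    have h3 : HasDerivAt φ (φ' u) u := by
      have := hlog.const_sub x
      simpa [hφ, hφ', div_eq_inv_mul] using this
    exact h3.hasDerivWithinAt
  have hinj : Set.InjOn φ (Set.Ioo 0 1) := by
    intro u hu v hv h
    have hlog : Real.log (1 + c * u) = Real.log (1 + c * v) := by
      simp only [hφ, sub_right_inj] at h; exact h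
    have := congrArg Real.exp hlog
    rw [Real.exp_log (hD u hu), Real.exp_log (hD v hv)] at this
    have : c * u = c * v := by linarith
    exact mul_left_cancel₀ hcpos.ne' this
  have main := integral_image_eq_integral_abs_deriv_smul measurableSet_Ioo hder hinj
      (fun y => (Real.exp y - 1) ^ (-lam) * (1 - Real.exp (-(x - y))) ^ (lam - 1))
  rw [himg] at main
  have hpt : ∀ u ∈ Set.Ioo (0:ℝ) 1,
      |φ' u| • ((Real.exp (φ u) - 1) ^ (-lam) * (1 - Real.exp (-(x - φ u))) ^ (lam - 1))
        = u ^ (lam - 1) * (1 - u) ^ (-lam) := by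
    intro u hu
    have hDu := hD u hu
    have hu0 := hu.1
    have hu1 := hu.2
    have hq : (0:ℝ) < c / (1 + c * u) := div_pos hcpos hDu
    have habs : |φ' u| = c / (1 + c * u) := by
      simp only [hφ']
      rw [abs_neg, abs_of_pos hq]
    have hexp : Real.exp (φ u) = Real.exp x / (1 + c * u) := by
      simp only [hφ]
      rw [Real.exp_sub, Real.exp_log hDu]
    have hA : Real.exp (φ u) - 1 = c / (1 + c * u) * (1 - u) := by
      rw [hexp]
      field_simp [hc]
      ring
    have hB : 1 - Real.exp (-(x - φ u)) = c / (1 + c * u) * u := by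
      have hxφ : x - φ u = Real.log (1 + c * u) := by simp [hφ]
      rw [hxφ, Real.exp_neg, Real.exp_log hDu]
      field_simp
      ring
    rw [smul_eq_mul, habs, hA, hB,
      Real.mul_rpow hq.le (by linarith : (0:ℝ) ≤ 1 - u),
      Real.mul_rpow hq.le hu0.le]
    have hone : (c / (1 + c * u)) * ((c / (1 + c * u)) ^ (-lam) * (c / (1 + c * u)) ^ (lam - 1)) = 1 := by
      calc (c / (1 + c * u)) * ((c / (1 + c * u)) ^ (-lam) * (c / (1 + c * u)) ^ (lam - 1))
          = (c / (1 + c * u)) ^ (1:ℝ) * ((c / (1 + c * u)) ^ (-lam) * (c / (1 + c * u)) ^ (lam - 1)) := by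
            rw [Real.rpow_one]
        _ = (c / (1 + c * u)) ^ ((1:ℝ) + (-lam + (lam - 1))) := by
            rw [Real.rpow_add hq, Real.rpow_add hq]
        _ = 1 := by
            rw [show (1:ℝ) + (-lam + (lam - 1)) = 0 by ring, Real.rpow_zero]
    linear_combination ((1 - u) ^ (-lam) * u ^ (lam - 1)) * hone
  calc (∫ y in (0:ℝ)..x, (Real.exp y - 1) ^ (-lam) * (1 - Real.exp (-(x - y))) ^ (lam - 1))
      = ∫ y in Set.Ioo (0:ℝ) x, (Real.exp y - 1) ^ (-lam) * (1 - Real.exp (-(x - y))) ^ (lam - 1) := by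
        rw [intervalIntegral.integral_of_le hx.le, MeasureTheory.integral_Ioc_eq_integral_Ioo]
    _ = ∫ u in Set.Ioo (0:ℝ) 1,
          |φ' u| • ((Real.exp (φ u) - 1) ^ (-lam) * (1 - Real.exp (-(x - φ u))) ^ (lam - 1)) := main
    _ = ∫ u in Set.Ioo (0:ℝ) 1, u ^ (lam - 1) * (1 - u) ^ (-lam) :=
        MeasureTheory.setIntegral_congr_fun measurableSet_Ioo hpt
    _ = ∫ u in (0:ℝ)..1, u ^ (lam - 1) * (1 - u) ^ (-lam) := by
        rw [intervalIntegral.integral_of_le (by norm_num : (0:ℝ) ≤ 1),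
          MeasureTheory.integral_Ioc_eq_integral_Ioo]
    _ = Real.Gamma lam * Real.Gamma (1 - lam) := real_beta_lemma lam h1 h2

theorem conjugate_scale_functions_convolution_identity
    (lam : ℝ) (hlam : 0 < lam ∧ lam < 1) :
    ∀ x : ℝ, 0 < x →
      (∫ y in (0 : ℝ)..x,
        ((Real.exp y - 1) ^ (-lam) / Real.Gamma (1 - lam)) *
          ((1 - Real.exp (-(x - y))) ^ (lam - 1) / Real.Gamma lam)) = 1 := by
  obtain ⟨h1, h2⟩ := hlam
  intro x hx
  have hΓ1 : Real.Gamma (1 - lam) ≠ 0 := (Real.Gamma_pos_of_pos (by linarith)).ne'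
  have hΓ2 : Real.Gamma lam ≠ 0 := (Real.Gamma_pos_of_pos h1).ne'
  have := inner_integral lam h1 h2 x hx
  calc (∫ y in (0 : ℝ)..x,
        ((Real.exp y - 1) ^ (-lam) / Real.Gamma (1 - lam)) *
          ((1 - Real.exp (-(x - y))) ^ (lam - 1) / Real.Gamma lam))
      = ∫ y in (0:ℝ)..x, ((Real.exp y - 1) ^ (-lam) * (1 - Real.exp (-(x - y))) ^ (lam - 1))
          / (Real.Gamma (1 - lam) * Real.Gamma lam) := by
        simp only [div_mul_div_comm]
    _ = (∫ y in (0:ℝ)..x, (Real.exp y - 1) ^ (-lam) * (1 - Real.exp (-(x - y))) ^ (lam - 1))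
          / (Real.Gamma (1 - lam) * Real.Gamma lam) := intervalIntegral.integral_div _ _
    _ = 1 := by rw [this]; field_simp
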